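/- Let D be a digraph with list dichromatic number at most 3. Then D is majority 3-choosable. -/

import Mathlib

open scoped Classical

variable {V : Type*} [Fintype V]

/-- The out-neighborhood of `v` in the digraph on `V` with edge relation `E`. -/
noncomputable def outNbrs (E : V → V → Prop) (v : V) : Finset V :=
  Finset.univ.filter (fun w => E v w)

/-- The in-neighborhood of `v` in the digraph on `V` with edge relation `E`. -/
noncomputable def inNbrs (E : V → V → Prop) (v : V) : Finset V :=
  Finset.univ.filter (fun w => E w v)

/-- `c` is a majority coloring of the digraph `(V, E)`: every vertex `v` has at
most `d⁺(v)/2` out-neighbors `w` with `c w = c v`. -/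
def IsMajorityColoring {α : Type*} (E : V → V → Prop) (c : V → α) : Prop :=
  ∀ v : V, 2 * ((outNbrs E v).filter (fun w => c w = c v)).card ≤ (outNbrs E v).card

/-- `l` is the vertex list of a directed cycle: a nonempty list of pairwise
distinct vertices in which each vertex has an edge to the next one, and the
last vertex has an edge back to the first one. -/
def IsDiCycle (E : V → V → Prop) (l : List V) : Prop :=
  l ≠ [] ∧ l.Nodup ∧ l.Chain' E ∧
    ∃ a b, l.head? = some a ∧ l.getLast? = some b ∧ E b a

/-- All vertices of the list `l` get the same color under `c`. -/
def MonochromaticList {α : Type*} (c : V → α) (l : List V) : Prop :=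
  ∀ u ∈ l, ∀ w ∈ l, c u = c w

/-- The digraph `(V, E)` is majority `k`-choosable: for every assignment of
lists of size at least `k` to the vertices there is a majority coloring
choosing each vertex's color from its list. -/
def MajorityChoosable (E : V → V → Prop) (k : ℕ) : Prop :=
  ∀ L : V → Finset ℕ, (∀ v, k ≤ (L v).card) →
    ∃ c : V → ℕ, (∀ v, c v ∈ L v) ∧ IsMajorityColoring E c

/- ### Auxiliary lemmas -/

/-- Along a chain for the relation "same `f`-value", every element has the
same `f`-value as the head. -/
lemma aux_chain'_all_eq {α β : Type*} (f : α → β) :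
    ∀ (l : List α), l.Chain' (fun u w => f u = f w) →
      ∀ (a : α), l.head? = some a → ∀ u ∈ l, f u = f a := by
  intro l
  induction l with
  | nil => simp
  | cons x t ih =>
    intro hc a ha u hu
    have hax : a = x := by
      simp only [List.head?_cons, Option.some.injEq] at ha
      exact ha.symm
    subst hax
    rcases List.mem_cons.mp hu with rfl | hu
    · rfl
    · cases t with
      | nil => simp at hu
      | cons y t' =>
        have h1 : f a = f y := (List.isChain_cons_cons.mp hc).1
        have h2 := ih (List.isChain_cons_cons.mp hc).2 y rfl u hu
        rw [h2, ← h1]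

/-- A `TransGen` witness yields a walk (a chain list). -/
lemma aux_transGen_to_walk {α : Type*} {R : α → α → Prop} {a b : α}
    (h : Relation.TransGen R a b) :
    ∃ l : List α, 2 ≤ l.length ∧ l.Chain' R ∧ l.head? = some a ∧ l.getLast? = some b := by
  induction h with
  | single hr =>
    rename_i c
    exact ⟨[a, c], by simp, List.isChain_pair.mpr hr, by simp, by simp⟩
  | tail _ hr ih =>
    rename_i c d hcd
    obtain ⟨l, hlen, hch, hh, hl⟩ := ih
    refine ⟨l ++ [d], by simp; omega, ?_, ?_, by simp [List.getLast?_concat]⟩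
    · refine List.isChain_append.mpr ⟨hch, List.isChain_singleton d, ?_⟩
      intro x hx y hy
      rw [Option.mem_def, hl, Option.some.injEq] at hx
      simp only [List.head?_cons, Option.mem_def, Option.some.injEq] at hy
      subst hx; subst hy
      exact hr
    · cases l with
      | nil => simp at hlen
      | cons z l' => simpa using hh

/-- A list with a duplicate decomposes around the duplicated element. -/
lemma aux_exists_dup_decomp {α : Type*} (C : List α) (h : ¬ C.Nodup) :
    ∃ (x : α) (p m s : List α), C = p ++ ((x :: m) ++ (x :: s)) := by
  classical
  rw [List.nodup_iff_count_le_one] at h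
  push_neg at h
  obtain ⟨x, hx⟩ := h
  have hmem : x ∈ C := by
    rw [← List.count_pos_iff]
    omega
  obtain ⟨p, r, rfl⟩ := List.append_of_mem hmem
  have hcnt : List.count x (p ++ x :: r) = List.count x p + List.count x r + 1 := by
    simp [List.count_append, List.count_cons]
    omega
  by_cases hxr : x ∈ r
  · obtain ⟨m, s, rfl⟩ := List.append_of_mem hxr
    exact ⟨x, p, m, s, by simp⟩
  · have hxp : x ∈ p := by
      have hr0 : List.count x r = 0 := List.count_eq_zero.mpr hxr
      have : 0 < List.count x p := by omega
      exact List.count_pos_iff.mp this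
    obtain ⟨p1, p2, rfl⟩ := List.append_of_mem hxp
    exact ⟨x, p1, p2, r, by simp⟩

/-- From a closed walk one can extract a simple closed walk (a cycle). -/
lemma aux_closed_walk_to_cycle {α : Type*} {R : α → α → Prop} :
    ∀ (n : ℕ) (C : List α), C.length ≤ n → C ≠ [] → C.Chain' R →
      (∃ a b, C.head? = some a ∧ C.getLast? = some b ∧ R b a) →
      ∃ C' : List α, C' ≠ [] ∧ C'.Nodup ∧ C'.Chain' R ∧
        ∃ a b, C'.head? = some a ∧ C'.getLast? = some b ∧ R b a := by
  intro n
  induction n with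
  | zero =>
    intro C hlen hne _ _
    cases C <;> simp_all
  | succ n ih =>
    intro C hlen hne hch hcl
    by_cases hnd : C.Nodup
    · exact ⟨C, hne, hnd, hch, hcl⟩
    obtain ⟨x, p, m, s, rfl⟩ := aux_exists_dup_decomp C hnd
    have h2 : List.Chain' R ((x :: m) ++ (x :: s)) := (List.isChain_append.mp hch).2.1
    obtain ⟨hc1, _, h3⟩ := List.isChain_append.mp h2
    have hlast : (x :: m).getLast? = some ((x :: m).getLast (List.cons_ne_nil x m)) :=
      List.getLast?_eq_getLast _
    refine ih (x :: m) ?_ (List.cons_ne_nil x m) hc1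
      ⟨x, (x :: m).getLast (List.cons_ne_nil x m), rfl, hlast, ?_⟩
    · have h4 : (p ++ ((x :: m) ++ (x :: s))).length ≤ n + 1 := hlen
      simp only [List.length_append, List.length_cons] at h4 ⊢
      omega
    · exact h3 _ (Option.mem_def.mpr hlast) x (Option.mem_def.mpr rfl)

/-- The cardinality of a filter does not depend on the decidability instance. -/
lemma aux_card_filter_irrel {α : Type*} (s : Finset α) (p : α → Prop)
    (h1 h2 : DecidablePred p) :
    (@Finset.filter α p h1 s).card = (@Finset.filter α p h2 s).card := by
  have h : (@Finset.filter α p h1 s) = (@Finset.filter α p h2 s) := by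
    ext a
    rw [@Finset.mem_filter _ _ h1, @Finset.mem_filter _ _ h2]
  rw [h]

/-- The greedy recoloring scheme: color the vertices in increasing order of
rank, using `pick` applied to the previously built partial coloring. -/
noncomputable def greedyAux {V : Type*} (pick : V → (V → ℕ) → ℕ) (rank : V → ℕ) :
    ℕ → V → ℕ
  | 0 => fun _ => 0
  | (n+1) => fun v =>
      if rank v = n then pick v (greedyAux pick rank n) else greedyAux pick rank n v

set_option maxHeartbeats 1000000

/-- Every digraph with list dichromatic number at most `3`
(for every assignment of lists of size at least `3` there is a choice of colors
from the lists leaving no directed cycle monochromatic) is majority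
`3`-choosable. -/
theorem majority_three_choosable_of_list_dichromatic_le_three
    {V : Type*} [Fintype V] (E : V → V → Prop) (hloopless : ∀ v : V, ¬ E v v)
    (hlistdichrom : ∀ L : V → Finset ℕ, (∀ v, 3 ≤ (L v).card) →
      ∃ c : V → ℕ, (∀ v, c v ∈ L v) ∧
        ∀ l : List V, IsDiCycle E l → ¬ MonochromaticList c l) :
    MajorityChoosable E 3 := by
  classical
  intro L hL
  -- Step 1: build the lists of encoded pairs.
  have hex : ∀ v : V, ∃ P : Finset ℕ, 3 ≤ P.card ∧
      ∀ p ∈ P, ∃ x y : ℕ, x < y ∧ p = Nat.pair x y ∧ x ∈ L v ∧ y ∈ L v := by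
    intro v
    obtain ⟨t, hts, htc⟩ := Finset.exists_subset_card_eq (hL v)
    obtain ⟨a, b, c, hab, hac, hbc, ht⟩ := Finset.card_eq_three.mp htc
    have ha : a ∈ L v := hts (by simp [ht])
    have hb : b ∈ L v := hts (by simp [ht])
    have hc : c ∈ L v := hts (by simp [ht])
    -- encoding of an unordered pair
    set e : ℕ → ℕ → ℕ := fun x y => Nat.pair (min x y) (max x y) with he
    have hedec : ∀ x y : ℕ, x ≠ y → x ∈ L v → y ∈ L v →
        ∃ x' y' : ℕ, x' < y' ∧ e x y = Nat.pair x' y' ∧ x' ∈ L v ∧ y' ∈ L v := by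
      intro x y hxy hx hy
      refine ⟨min x y, max x y, by omega, rfl, ?_, ?_⟩
      · rcases min_choice x y with h | h <;> rw [h] <;> assumption
      · rcases max_choice x y with h | h <;> rw [h] <;> assumption
    have heinj : ∀ x y x' y' : ℕ, e x y = e x' y' →
        (min x y = min x' y' ∧ max x y = max x' y') := by
      intro x y x' y' hxy
      exact Nat.pair_eq_pair.mp hxy
    have h12 : e a b ≠ e a c := by
      intro hcon; have := heinj _ _ _ _ hcon; omega
    have h13 : e a b ≠ e b c := by
      intro hcon; have := heinj _ _ _ _ hcon; omega
    have h23 : e a c ≠ e b c := by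
      intro hcon; have := heinj _ _ _ _ hcon; omega
    refine ⟨{e a b, e a c, e b c}, ?_, ?_⟩
    · have hcard : ({e a b, e a c, e b c} : Finset ℕ).card = 3 :=
        Finset.card_eq_three.mpr ⟨e a b, e a c, e b c, h12, h13, h23, rfl⟩
      omega
    · intro p hp
      simp only [Finset.mem_insert, Finset.mem_singleton] at hp
      rcases hp with rfl | rfl | rfl
      · exact hedec a b hab ha hb
      · exact hedec a c hac ha hc
      · exact hedec b c hbc hb hc
  choose P hP3 hPdec using hex
  -- Step 2: apply the hypothesis to the pair lists.
  obtain ⟨q, hqmem, hqcyc⟩ := hlistdichrom P hP3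
  have hdec : ∀ v, ∃ x y : ℕ, x < y ∧ q v = Nat.pair x y ∧ x ∈ L v ∧ y ∈ L v :=
    fun v => hPdec v _ (hqmem v)
  choose xf yf hxy hqpair hxL hyL using hdec
  set S : V → Finset ℕ := fun v => {xf v, yf v} with hS
  have hqinj : ∀ v w, xf v = xf w → yf v = yf w → q v = q w := by
    intro v w h1 h2; rw [hqpair v, hqpair w, h1, h2]
  -- two vertices with different pairs share at most one color
  have hSint : ∀ v w, q v ≠ q w → ∀ z ∈ S v, z ∈ S w → ∀ z' ∈ S v, z' ∈ S w → z = z' := by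
    intro v w hqne z hz1 hz2 z' hz1' hz2'
    by_contra hne
    simp only [hS, Finset.mem_insert, Finset.mem_singleton] at hz1 hz2 hz1' hz2'
    have hv := hxy v
    have hw := hxy w
    have hkey : xf v = xf w ∧ yf v = yf w := by omega
    exact hqne (hqinj v w hkey.1 hkey.2)
  -- Step 3: the monochromatic (same pair) digraph is acyclic.
  set M : V → V → Prop := fun u w => E u w ∧ q u = q w with hM
  have hMacyc : ∀ v, ¬ Relation.TransGen M v v := by
    intro v hv
    obtain ⟨l, hlen, hch, hh, hl⟩ := aux_transGen_to_walk hv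
    -- peel off the last vertex to obtain a closed walk
    have hlne : l ≠ [] := by
      intro hcon
      rw [hcon] at hlen
      simp at hlen
    have hlsplit : l = l.dropLast ++ [v] := by
      conv_lhs => rw [← List.dropLast_append_getLast hlne]
      congr 1
      have := List.getLast?_eq_getLast (l := l) hlne
      rw [hl] at this
      simp only [Option.some.injEq] at this
      rw [← this]
    have hCne : l.dropLast ≠ [] := by
      intro hcon
      rw [hlsplit, hcon] at hlen
      simp at hlen
    have hchl : List.Chain' M (l.dropLast ++ [v]) := by rw [← hlsplit]; exact hch
    obtain ⟨hC, _, hcond⟩ := List.isChain_append.mp hchl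
    have hlastC : l.dropLast.getLast? = some (l.dropLast.getLast hCne) :=
      List.getLast?_eq_getLast _
    have hheadC : l.dropLast.head? = some v := by
      rw [hlsplit] at hh
      cases hdl : l.dropLast with
      | nil => exact absurd hdl hCne
      | cons z t =>
        rw [hdl] at hh
        simp only [List.cons_append, List.head?_cons, Option.some.injEq] at hh
        simp [hh]
    have hclose : M (l.dropLast.getLast hCne) v :=
      hcond _ (Option.mem_def.mpr hlastC) v (Option.mem_def.mpr rfl)
    obtain ⟨C', hC'ne, hC'nd, hC'ch, a, b, hha, hlb, hba⟩ :=
      aux_closed_walk_to_cycle l.dropLast.length l.dropLast le_rfl hCne hC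
        ⟨v, l.dropLast.getLast hCne, hheadC, hlastC, hclose⟩
    have hdc : IsDiCycle E C' :=
      ⟨hC'ne, hC'nd, hC'ch.imp (fun _ _ h => h.1), a, b, hha, hlb, hba.1⟩
    have hmono : MonochromaticList q C' := by
      intro u hu w hw
      have hqc : C'.Chain' (fun u w => q u = q w) := hC'ch.imp (fun _ _ h => h.2)
      have h1 := aux_chain'_all_eq q C' hqc a hha u hu
      have h2 := aux_chain'_all_eq q C' hqc a hha w hw
      rw [h1, h2]
    exact hqcyc C' hdc hmono
  -- Step 4: rank function decreasing along monochromatic arcs.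
  set reach : V → Finset V := fun v => Finset.univ.filter (fun u => Relation.TransGen M v u)
    with hreach
  have hrk : ∀ v w, M v w → (reach w).card < (reach v).card := by
    intro v w hMvw
    have hsub : reach w ⊆ reach v := by
      intro u hu
      simp only [hreach, Finset.mem_filter, Finset.mem_univ, true_and] at hu ⊢
      exact Relation.TransGen.head hMvw hu
    refine Finset.card_lt_card ((Finset.ssubset_iff_of_subset hsub).mpr ⟨w, ?_, ?_⟩)
    · simp only [hreach, Finset.mem_filter, Finset.mem_univ, true_and]
      exact Relation.TransGen.single hMvw
    · simp only [hreach, Finset.mem_filter, Finset.mem_univ, true_and]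
      exact hMacyc w
  set n : ℕ := Fintype.card V with hn
  set rank : V → ℕ := fun v => (reach v).card * n + (Fintype.equivFin V v) with hrank
  have hrkM : ∀ v w, M v w → rank w < rank v := by
    intro v w hMvw
    have h1 : (reach w).card < (reach v).card := hrk v w hMvw
    have h2 : ((Fintype.equivFin V) w : ℕ) < n := (Fintype.equivFin V w).isLt
    have h3 : ((reach w).card + 1) * n ≤ (reach v).card * n :=
      Nat.mul_le_mul_right n h1
    simp only [hrank]
    nlinarith [((Fintype.equivFin V) v : ℕ).zero_le]
  -- Step 5: the greedy choice function.
  set g : V → (V → ℕ) → ℕ → ℕ := fun v prev x =>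
    ((outNbrs E v).filter (fun w => rank w < rank v ∧ prev w = x)).card +
    ((outNbrs E v).filter (fun w => ¬ rank w < rank v ∧ x ∈ S w)).card with hg
  have hpickex : ∀ (v : V) (prev : V → ℕ), ∃ x, x ∈ S v ∧ ∀ y ∈ S v,
      g v prev x ≤ g v prev y := by
    intro v prev
    obtain ⟨x, hx1, hx2⟩ := (S v).exists_min_image (g v prev)
      ⟨xf v, by simp [hS]⟩
    exact ⟨x, hx1, hx2⟩
  choose pick hpickS hpickmin using hpickex
  set G : ℕ → V → ℕ := greedyAux pick rank with hG
  set cc : V → ℕ := fun v => G (rank v + 1) v with hcc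
  have hGsucc : ∀ (m : ℕ) (v : V),
      G (m + 1) v = if rank v = m then pick v (G m) else G m v := by
    intro m v; rfl
  have hGstab : ∀ (N : ℕ) (v : V), rank v < N → G N v = cc v := by
    intro N
    induction N with
    | zero => intro v hv; omega
    | succ N ih =>
      intro v hv
      by_cases h : rank v = N
      · simp only [hcc, h]
      · have hlt : rank v < N := by omega
        rw [hGsucc N v, if_neg h]
        exact ih v hlt
  have hcc_eq : ∀ v, cc v = pick v (G (rank v)) := by
    intro v
    show G (rank v + 1) v = _
    rw [hGsucc, if_pos rfl]
  have hccS : ∀ v, cc v ∈ S v := by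
    intro v; rw [hcc_eq]; exact hpickS v _
  have hccL : ∀ v, cc v ∈ L v := by
    intro v
    have h := hccS v
    simp only [hS, Finset.mem_insert, Finset.mem_singleton] at h
    rcases h with h | h <;> rw [h]
    · exact hxL v
    · exact hyL v
  -- g computed with the partial coloring agrees with g computed with cc
  set gc : V → ℕ → ℕ := fun v x =>
    ((outNbrs E v).filter (fun w => rank w < rank v ∧ cc w = x)).card +
    ((outNbrs E v).filter (fun w => ¬ rank w < rank v ∧ x ∈ S w)).card with hgc
  have hgeq : ∀ v x, g v (G (rank v)) x = gc v x := by
    intro v x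
    simp only [hg, hgc]
    congr 1
    apply congrArg
    apply Finset.filter_congr
    intro w _
    constructor
    · rintro ⟨h1, h2⟩; exact ⟨h1, by rw [← hGstab (rank v) w h1]; exact h2⟩
    · rintro ⟨h1, h2⟩; exact ⟨h1, by rw [hGstab (rank v) w h1]; exact h2⟩
  have hmin : ∀ v, ∀ y ∈ S v, gc v (cc v) ≤ gc v y := by
    intro v y hy
    rw [← hgeq, ← hgeq, hcc_eq]
    exact hpickmin v _ y hy
  -- Step 6: verify the majority condition.
  refine ⟨cc, hccL, ?_⟩
  intro v
  have hqrank : ∀ w ∈ outNbrs E v, ¬ rank w < rank v → q w ≠ q v := by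
    intro w hw hnr hq
    have hE : E v w := by
      simp only [outNbrs, Finset.mem_filter, Finset.mem_univ, true_and] at hw
      exact hw
    exact hnr (hrkM v w ⟨hE, hq.symm⟩)
  -- the number of monochromatic out-neighbors is at most gc v (cc v)
  have hcount : ((outNbrs E v).filter (fun w => cc w = cc v)).card ≤ gc v (cc v) := by
    have hsub : (outNbrs E v).filter (fun w => cc w = cc v) ⊆
        (outNbrs E v).filter (fun w => rank w < rank v ∧ cc w = cc v) ∪
        (outNbrs E v).filter (fun w => ¬ rank w < rank v ∧ cc v ∈ S w) := by
      intro w hw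
      simp only [Finset.mem_filter, Finset.mem_union] at hw ⊢
      obtain ⟨hw1, hw2⟩ := hw
      by_cases hr : rank w < rank v
      · exact Or.inl ⟨hw1, hr, hw2⟩
      · exact Or.inr ⟨hw1, hr, hw2 ▸ hccS w⟩
    calc ((outNbrs E v).filter (fun w => cc w = cc v)).card
        ≤ _ := Finset.card_le_card hsub
      _ ≤ gc v (cc v) := Finset.card_union_le _ _
  -- the two candidate colors together cost at most the out-degree
  have hsum : gc v (xf v) + gc v (yf v) ≤ (outNbrs E v).card := by
    have hdisj1 : Disjoint
        ((outNbrs E v).filter (fun w => rank w < rank v ∧ cc w = xf v))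
        ((outNbrs E v).filter (fun w => rank w < rank v ∧ cc w = yf v)) := by
      rw [Finset.disjoint_left]
      intro w h1 h2
      simp only [Finset.mem_filter] at h1 h2
      have := hxy v
      omega
    have hdisj2 : Disjoint
        ((outNbrs E v).filter (fun w => ¬ rank w < rank v ∧ xf v ∈ S w))
        ((outNbrs E v).filter (fun w => ¬ rank w < rank v ∧ yf v ∈ S w)) := by
      rw [Finset.disjoint_left]
      intro w h1 h2
      simp only [Finset.mem_filter] at h1 h2
      have hqne : q v ≠ q w := fun h => (hqrank w h1.1 h1.2.1) h.symm
      have hx1 : xf v ∈ S v := by simp [hS]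
      have hy1 : yf v ∈ S v := by simp [hS]
      have := hSint v w hqne (xf v) hx1 h1.2.2 (yf v) hy1 h2.2.2
      have := hxy v
      omega
    have hA : ((outNbrs E v).filter (fun w => rank w < rank v ∧ cc w = xf v)).card +
        ((outNbrs E v).filter (fun w => rank w < rank v ∧ cc w = yf v)).card ≤
        ((outNbrs E v).filter (fun w => rank w < rank v)).card := by
      rw [← Finset.card_union_of_disjoint hdisj1]
      apply Finset.card_le_card
      intro w hw
      simp only [Finset.mem_union, Finset.mem_filter] at hw ⊢
      rcases hw with ⟨h1, h2, _⟩ | ⟨h1, h2, _⟩ <;> exact ⟨h1, h2⟩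
    have hB : ((outNbrs E v).filter (fun w => ¬ rank w < rank v ∧ xf v ∈ S w)).card +
        ((outNbrs E v).filter (fun w => ¬ rank w < rank v ∧ yf v ∈ S w)).card ≤
        ((outNbrs E v).filter (fun w => ¬ rank w < rank v)).card := by
      rw [← Finset.card_union_of_disjoint hdisj2]
      apply Finset.card_le_card
      intro w hw
      simp only [Finset.mem_union, Finset.mem_filter] at hw ⊢
      rcases hw with ⟨h1, h2, _⟩ | ⟨h1, h2, _⟩ <;> exact ⟨h1, h2⟩
    have htot : ((outNbrs E v).filter (fun w => rank w < rank v)).card +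
        ((outNbrs E v).filter (fun w => ¬ rank w < rank v)).card =
        (outNbrs E v).card :=
      Finset.card_filter_add_card_filter_not _
    simp only [hgc]
    omega
  have hminx := hmin v (xf v) (by simp [hS])
  have hminy := hmin v (yf v) (by simp [hS])
  have hfinal : 2 * ((outNbrs E v).filter (fun w => cc w = cc v)).card ≤ (outNbrs E v).card := by
    omega
  rw [aux_card_filter_irrel (outNbrs E v) (fun w => cc w = cc v)
      (fun a => Classical.propDecidable (cc a = cc v))
      (fun a => instDecidableEqNat (cc a) (cc v))]
  exact hfinal
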